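/- For ξ ∈ (0,1), α, ε > 0, and K ≥ (2ξ/(αε))^{1/(1−ξ)}, the sequence defined by u_0 = 0 and u_{k+1} = (1 − α ε_k) u_k + ε_k² with ε_k = ε/(k+K)^ξ satisfies u_k ≤ (2ε/α) · 1/(k+K)^ξ for all k ≥ 0. -/

import Mathlib

/-- Key difference bound: for `t ≥ 1`, `0 < ξ < 1`,
    `1/t^ξ - 1/(t+1)^ξ ≤ ξ / t^(ξ+1)`. -/
lemma stmt8_aux (ξ t : ℝ) (h0 : 0 < ξ) (h1 : ξ < 1) (ht : 1 ≤ t) :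
    1 / t ^ ξ - ξ / t ^ (ξ + 1) ≤ 1 / (t + 1) ^ ξ := by
  have ht0 : (0:ℝ) < t := lt_of_lt_of_le one_pos ht
  have htp : 0 < t ^ ξ := Real.rpow_pos_of_pos ht0 _
  have ht1 : (0:ℝ) < t + 1 := by linarith
  have htp1 : 0 < (t + 1) ^ ξ := Real.rpow_pos_of_pos ht1 _
  have htξ : ξ < t := lt_of_lt_of_le h1 ht
  -- Bernoulli: (t+1)^ξ ≤ t^ξ * (1 + ξ/t)
  have hb : (t + 1) ^ ξ ≤ t ^ ξ * (1 + ξ / t) := by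
    have he : t + 1 = t * (1 + 1 / t) := by field_simp
    rw [he, Real.mul_rpow ht0.le (by positivity)]
    gcongr
    have hber := rpow_one_add_le_one_add_mul_self (s := 1 / t)
      (by have h := one_div_pos.mpr ht0; linarith) h0.le h1.le
    calc (1 + 1 / t) ^ ξ ≤ 1 + ξ * (1 / t) := hber
      _ = 1 + ξ / t := by ring
  -- main step: (t - ξ) * (t+1)^ξ ≤ t * t^ξ
  have h2 : (t - ξ) * (t + 1) ^ ξ ≤ t * t ^ ξ := by
    calc (t - ξ) * (t + 1) ^ ξ ≤ (t - ξ) * (t ^ ξ * (1 + ξ / t)) := by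
          apply mul_le_mul_of_nonneg_left hb (by linarith)
      _ = t ^ ξ * (t - ξ ^ 2 / t) := by field_simp; ring
      _ ≤ t ^ ξ * t := by
          apply mul_le_mul_of_nonneg_left _ htp.le
          have : 0 ≤ ξ ^ 2 / t := by positivity
          linarith
      _ = t * t ^ ξ := by ring
  have htpow : t ^ (ξ + 1) = t ^ ξ * t := by
    rw [Real.rpow_add ht0, Real.rpow_one]
  rw [htpow]
  rw [div_sub_div _ _ htp.ne' (by positivity : (t ^ ξ * t) ≠ 0), div_le_div_iff₀
    (by positivity) htp1]
  calc (1 * (t ^ ξ * t) - t ^ ξ * ξ) * (t + 1) ^ ξ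
      = t ^ ξ * ((t - ξ) * (t + 1) ^ ξ) := by ring
    _ ≤ t ^ ξ * (t * t ^ ξ) := by exact mul_le_mul_of_nonneg_left h2 htp.le
    _ = 1 * (t ^ ξ * (t ^ ξ * t)) := by ring

/-- with stepsizes `ε_k = ε/(k+K)^ξ`, `ξ ∈ (0,1)`,
    `K ≥ max(1, (2ξ/(αε))^{1/(1-ξ)})`, the sequence `u_0 = 0`,
    `u_{k+1} = (1-αε_k)u_k + ε_k²` satisfies `u_k ≤ (2ε/α)/(k+K)^ξ`. -/
theorem stmt_8 (α ε ξ K : ℝ) (hξ : ξ ∈ Set.Ioo (0 : ℝ) 1)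
    (hα : 0 < α) (hε : 0 < ε)
    (hK1 : 1 ≤ K) (hK2 : (2 * ξ / (α * ε)) ^ ((1 : ℝ) / (1 - ξ)) ≤ K)
    (hstep : ∀ k : ℕ, α * (ε / (k + K) ^ ξ) ≤ 1)
    (u : ℕ → ℝ) (hu0 : u 0 = 0)
    (hurec : ∀ k : ℕ,
      u (k + 1) = (1 - α * (ε / ((k : ℝ) + K) ^ ξ)) * u k + (ε / ((k : ℝ) + K) ^ ξ) ^ 2) :
    ∀ k : ℕ, u k ≤ (2 * ε / α) / ((k : ℝ) + K) ^ ξ := by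
  obtain ⟨hξ0, hξ1⟩ := hξ
  intro k
  induction k with
  | zero =>
    rw [hu0]
    have : (0:ℝ) < ((0:ℕ):ℝ) + K := by push_cast; linarith
    positivity
  | succ k ih =>
    set t : ℝ := (k : ℝ) + K with htdef
    have ht : 1 ≤ t := by
      have : (0:ℝ) ≤ (k:ℝ) := Nat.cast_nonneg k
      simp only [htdef]; linarith
    have ht0 : (0:ℝ) < t := lt_of_lt_of_le one_pos ht
    have htp : 0 < t ^ ξ := Real.rpow_pos_of_pos ht0 _
    have ht1 : (0:ℝ) < t + 1 := by linarith
    have htp1 : 0 < (t + 1) ^ ξ := Real.rpow_pos_of_pos ht1 _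
    have hcast : ((k + 1 : ℕ) : ℝ) + K = t + 1 := by push_cast; simp only [htdef]; ring
    have hs := hstep k
    have h1 : 0 ≤ 1 - α * (ε / t ^ ξ) := by linarith
    -- t^(1-ξ) ≥ 2ξ/(αε)
    have hA0 : (0:ℝ) ≤ 2 * ξ / (α * ε) := by positivity
    have hAt : 2 * ξ / (α * ε) ≤ t ^ (1 - ξ) := by
      have hKt : (2 * ξ / (α * ε)) ^ ((1 : ℝ) / (1 - ξ)) ≤ t := by
        have : (0:ℝ) ≤ (k:ℝ) := Nat.cast_nonneg k
        simp only [htdef]; linarith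
      have := Real.rpow_le_rpow (by positivity) hKt (by linarith : (0:ℝ) ≤ 1 - ξ)
      rwa [← Real.rpow_mul hA0, one_div_mul_cancel
        (by linarith : (1:ℝ) - ξ ≠ 0), Real.rpow_one] at this
    have hsplit : t ^ (1 - ξ) * t ^ ξ = t := by
      rw [← Real.rpow_add ht0]; norm_num
    -- key: (2ε/α) * ξ * t^ξ ≤ ε^2 * t
    have hkey : (2 * ε / α) * ξ * t ^ ξ ≤ ε ^ 2 * t := by
      calc (2 * ε / α) * ξ * t ^ ξ = ε ^ 2 * (2 * ξ / (α * ε)) * t ^ ξ := by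
            field_simp
        _ ≤ ε ^ 2 * t ^ (1 - ξ) * t ^ ξ := by
            apply mul_le_mul_of_nonneg_right _ htp.le
            exact mul_le_mul_of_nonneg_left hAt (by positivity)
        _ = ε ^ 2 * t := by rw [mul_assoc, hsplit]
    -- from aux lemma
    have haux := stmt8_aux ξ t hξ0 hξ1 ht
    have haux' : (2 * ε / α) * (1 / t ^ ξ - ξ / t ^ (ξ + 1)) ≤ (2 * ε / α) * (1 / (t + 1) ^ ξ) :=
      mul_le_mul_of_nonneg_left haux (by positivity)
    have htpow : t ^ (ξ + 1) = t ^ ξ * t := by rw [Real.rpow_add ht0, Real.rpow_one]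
    -- main inequality
    have hmain : (1 - α * (ε / t ^ ξ)) * ((2 * ε / α) / t ^ ξ) + (ε / t ^ ξ) ^ 2
        ≤ (2 * ε / α) / (t + 1) ^ ξ := by
      have hmid : (1 - α * (ε / t ^ ξ)) * ((2 * ε / α) / t ^ ξ) + (ε / t ^ ξ) ^ 2
          ≤ (2 * ε / α) * (1 / t ^ ξ - ξ / t ^ (ξ + 1)) := by
        rw [htpow]
        have hexp : (2 * ε / α) * (1 / t ^ ξ - ξ / (t ^ ξ * t))
            - ((1 - α * (ε / t ^ ξ)) * ((2 * ε / α) / t ^ ξ) + (ε / t ^ ξ) ^ 2)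
            = (ε ^ 2 * t - (2 * ε / α) * ξ * t ^ ξ) / ((t ^ ξ) ^ 2 * t) := by
          field_simp
          ring
        have hnn : (0:ℝ) ≤ (ε ^ 2 * t - (2 * ε / α) * ξ * t ^ ξ) / ((t ^ ξ) ^ 2 * t) :=
          div_nonneg (by linarith) (by positivity)
        linarith [hexp ▸ hnn]
      calc _ ≤ (2 * ε / α) * (1 / t ^ ξ - ξ / t ^ (ξ + 1)) := hmid
        _ ≤ (2 * ε / α) * (1 / (t + 1) ^ ξ) := haux'
        _ = (2 * ε / α) / (t + 1) ^ ξ := by rw [mul_one_div]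
    rw [hurec k, hcast]
    calc (1 - α * (ε / t ^ ξ)) * u k + (ε / t ^ ξ) ^ 2
        ≤ (1 - α * (ε / t ^ ξ)) * ((2 * ε / α) / t ^ ξ) + (ε / t ^ ξ) ^ 2 := by
          exact add_le_add_left (mul_le_mul_of_nonneg_left ih h1) _
      _ ≤ (2 * ε / α) / (t + 1) ^ ξ := hmain
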